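/- Let μ be a strictly positive finitely additive probability measure on an algebra 𝔄 of subsets of X, and let Z ⊆ X be such that for i ∈ {0,1} (with Z⁰ = Z and Z¹ = X \ Z) one has μ*(A ∩ Zⁱ) > 0 whenever A ∈ 𝔄 and A ∩ Zⁱ ≠ ∅. Then μ extends to a strictly positive finitely additive probability measure on the algebra 𝔄(Z) generated by 𝔄 ∪ {Z}. -/
import Mathlib


open Set

/-- `𝔄` is an algebra of subsets of `X`. -/
def IsAlg {X : Type*} (𝔄 : Set (Set X)) : Prop :=
  ∅ ∈ 𝔄 ∧ (∀ A ∈ 𝔄, Aᶜ ∈ 𝔄) ∧ ∀ A ∈ 𝔄, ∀ B ∈ 𝔄, A ∪ B ∈ 𝔄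

/-- `μ` is a finitely additive probability measure on the algebra `𝔄`. -/
def IsFAProb {X : Type*} (𝔄 : Set (Set X)) (μ : Set X → ℝ) : Prop :=
  μ univ = 1 ∧ (∀ A ∈ 𝔄, 0 ≤ μ A) ∧
    ∀ A ∈ 𝔄, ∀ B ∈ 𝔄, Disjoint A B → μ (A ∪ B) = μ A + μ B

/-- `μ` is strictly positive on `𝔄`. -/
def StrictlyPos {X : Type*} (𝔄 : Set (Set X)) (μ : Set X → ℝ) : Prop :=
  ∀ A ∈ 𝔄, A.Nonempty → 0 < μ A

/-- The outer measure `μ*` induced by `μ` on `𝔄`. -/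
noncomputable def outerM {X : Type*} (𝔄 : Set (Set X)) (μ : Set X → ℝ) (E : Set X) : ℝ :=
  sInf (μ '' {A | A ∈ 𝔄 ∧ E ⊆ A})

noncomputable def innerM {X : Type*} (𝔄 : Set (Set X)) (μ : Set X → ℝ) (E : Set X) : ℝ :=
  sSup (μ '' {A | A ∈ 𝔄 ∧ A ⊆ E})

section
variable {X : Type*} {𝔄 : Set (Set X)} {μ : Set X → ℝ}
variable (h𝔄 : IsAlg 𝔄) (hμ : IsFAProb 𝔄 μ)
include h𝔄

lemma alg_univ : univ ∈ 𝔄 := by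
  have := h𝔄.2.1 ∅ h𝔄.1; simpa using this

lemma alg_inter {A B : Set X} (hA : A ∈ 𝔄) (hB : B ∈ 𝔄) : A ∩ B ∈ 𝔄 := by
  have := h𝔄.2.1 _ (h𝔄.2.2 _ (h𝔄.2.1 A hA) _ (h𝔄.2.1 B hB))
  simpa [compl_union, compl_compl] using this

lemma alg_diff {A B : Set X} (hA : A ∈ 𝔄) (hB : B ∈ 𝔄) : A \ B ∈ 𝔄 := by
  have := alg_inter h𝔄 hA (h𝔄.2.1 B hB); simpa [diff_eq] using this

include hμ

lemma mu_empty : μ ∅ = 0 := by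
  have := hμ.2.2 ∅ h𝔄.1 ∅ h𝔄.1 (by simp)
  simp at this; linarith

lemma mu_split {A B : Set X} (hA : A ∈ 𝔄) (hB : B ∈ 𝔄) :
    μ B = μ (B ∩ A) + μ (B \ A) := by
  have h1 : (B ∩ A) ∪ (B \ A) = B := by ext x; by_cases hx : x ∈ A <;> simp [hx]
  have h2 := hμ.2.2 _ (alg_inter h𝔄 hB hA) _ (alg_diff h𝔄 hB hA)
    (by rw [Set.disjoint_iff_inter_eq_empty]; ext x; by_cases hx : x ∈ A <;> simp [hx])
  rw [h1] at h2; exact h2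

lemma mu_mono {A B : Set X} (hA : A ∈ 𝔄) (hB : B ∈ 𝔄) (hAB : A ⊆ B) : μ A ≤ μ B := by
  have h1 := mu_split h𝔄 hμ hA hB
  rw [inter_eq_self_of_subset_right hAB] at h1
  linarith [hμ.2.1 _ (alg_diff h𝔄 hB hA)]

lemma mu_le_one {A : Set X} (hA : A ∈ 𝔄) : μ A ≤ 1 := by
  have := mu_mono h𝔄 hμ hA (alg_univ h𝔄) (subset_univ A)
  rwa [hμ.1] at this
end

section
variable {X : Type*} {𝔄 : Set (Set X)} {μ : Set X → ℝ}
variable (h𝔄 : IsAlg 𝔄) (hμ : IsFAProb 𝔄 μ)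
include h𝔄 hμ

lemma outer_bddBelow (E : Set X) : BddBelow (μ '' {A | A ∈ 𝔄 ∧ E ⊆ A}) :=
  ⟨0, by rintro x ⟨A, ⟨hA, _⟩, rfl⟩; exact hμ.2.1 A hA⟩

lemma outer_nonempty (E : Set X) : (μ '' {A | A ∈ 𝔄 ∧ E ⊆ A}).Nonempty :=
  ⟨μ univ, univ, ⟨alg_univ h𝔄, subset_univ E⟩, rfl⟩

lemma outer_le {E B : Set X} (hB : B ∈ 𝔄) (hEB : E ⊆ B) : outerM 𝔄 μ E ≤ μ B :=
  csInf_le (outer_bddBelow h𝔄 hμ E) ⟨B, ⟨hB, hEB⟩, rfl⟩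

lemma le_outer {E : Set X} {c : ℝ} (h : ∀ B ∈ 𝔄, E ⊆ B → c ≤ μ B) : c ≤ outerM 𝔄 μ E :=
  le_csInf (outer_nonempty h𝔄 hμ E) (by rintro x ⟨A, ⟨hA, hEA⟩, rfl⟩; exact h A hA hEA)

lemma outer_nonneg (E : Set X) : 0 ≤ outerM 𝔄 μ E :=
  le_outer h𝔄 hμ fun B hB _ => hμ.2.1 B hB

lemma inner_bddAbove (E : Set X) : BddAbove (μ '' {A | A ∈ 𝔄 ∧ A ⊆ E}) :=
  ⟨1, by rintro x ⟨A, ⟨hA, _⟩, rfl⟩; exact mu_le_one h𝔄 hμ hA⟩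

lemma inner_nonempty (E : Set X) : (μ '' {A | A ∈ 𝔄 ∧ A ⊆ E}).Nonempty :=
  ⟨μ ∅, ∅, ⟨h𝔄.1, empty_subset E⟩, rfl⟩

lemma le_inner {E B : Set X} (hB : B ∈ 𝔄) (hBE : B ⊆ E) : μ B ≤ innerM 𝔄 μ E :=
  le_csSup (inner_bddAbove h𝔄 hμ E) ⟨B, ⟨hB, hBE⟩, rfl⟩

lemma inner_le {E : Set X} {c : ℝ} (h : ∀ B ∈ 𝔄, B ⊆ E → μ B ≤ c) : innerM 𝔄 μ E ≤ c :=
  csSup_le (inner_nonempty h𝔄 hμ E) (by rintro x ⟨A, ⟨hA, hAE⟩, rfl⟩; exact h A hA hAE)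

lemma inner_nonneg (E : Set X) : 0 ≤ innerM 𝔄 μ E := by
  have := le_inner h𝔄 hμ h𝔄.1 (empty_subset E)
  rwa [mu_empty h𝔄 hμ] at this
end

section
set_option linter.unusedSectionVars false
variable {X : Type*} {𝔄 : Set (Set X)} {μ : Set X → ℝ}
variable (h𝔄 : IsAlg 𝔄) (hμ : IsFAProb 𝔄 μ)
include h𝔄 hμ

lemma mu_subadd {A B : Set X} (hA : A ∈ 𝔄) (hB : B ∈ 𝔄) : μ (A ∪ B) ≤ μ A + μ B := by
  have h1 := mu_split h𝔄 hμ hA (h𝔄.2.2 A hA B hB)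
  have h2 : (A ∪ B) ∩ A = A := by ext x; simp; tauto
  have h3 : (A ∪ B) \ A ⊆ B := by intro x hx; rcases hx.1 with h | h; exact absurd h hx.2; exact h
  rw [h2] at h1
  have := mu_mono h𝔄 hμ (alg_diff h𝔄 (h𝔄.2.2 A hA B hB) hA) hB h3
  linarith

/-- outer measure adds on traces of disjoint algebra sets -/
lemma outer_add {A A' W : Set X} (hA : A ∈ 𝔄) (hA' : A' ∈ 𝔄) (hd : A ∩ A' = ∅) :
    outerM 𝔄 μ ((A ∩ W) ∪ (A' ∩ W)) = outerM 𝔄 μ (A ∩ W) + outerM 𝔄 μ (A' ∩ W) := by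
  apply le_antisymm
  · -- ≤ : nested le_csInf style
    have key : ∀ B ∈ 𝔄, A ∩ W ⊆ B → ∀ B' ∈ 𝔄, A' ∩ W ⊆ B' →
        outerM 𝔄 μ ((A ∩ W) ∪ (A' ∩ W)) ≤ μ B + μ B' := by
      intro B hB hEB B' hB' hFB'
      have hsub : (A ∩ W) ∪ (A' ∩ W) ⊆ B ∪ B' := union_subset_union hEB hFB'
      calc outerM 𝔄 μ ((A ∩ W) ∪ (A' ∩ W)) ≤ μ (B ∪ B') :=
            outer_le h𝔄 hμ (h𝔄.2.2 B hB B' hB') hsub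
        _ ≤ μ B + μ B' := mu_subadd h𝔄 hμ hB hB'
    have : outerM 𝔄 μ ((A ∩ W) ∪ (A' ∩ W)) - outerM 𝔄 μ (A' ∩ W) ≤ outerM 𝔄 μ (A ∩ W) := by
      apply le_outer h𝔄 hμ
      intro B hB hEB
      have : outerM 𝔄 μ ((A ∩ W) ∪ (A' ∩ W)) - μ B ≤ outerM 𝔄 μ (A' ∩ W) := by
        apply le_outer h𝔄 hμ
        intro B' hB' hFB'
        linarith [key B hB hEB B' hB' hFB']
      linarith
    linarith
  · apply le_outer h𝔄 hμ
    intro B hB hsub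
    have h1 : A ∩ W ⊆ B ∩ A := fun x hx => ⟨hsub (Or.inl hx), hx.1⟩
    have h2 : A' ∩ W ⊆ B ∩ A' := fun x hx => ⟨hsub (Or.inr hx), hx.1⟩
    have ho1 := outer_le h𝔄 hμ (alg_inter h𝔄 hB hA) h1
    have ho2 := outer_le h𝔄 hμ (alg_inter h𝔄 hB hA') h2
    have hdisj : Disjoint (B ∩ A) (B ∩ A') := by
      rw [Set.disjoint_iff_inter_eq_empty]
      ext x; simp only [mem_inter_iff, mem_empty_iff_false, iff_false]
      rintro ⟨⟨-, h1⟩, -, h2⟩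
      have : x ∈ A ∩ A' := ⟨h1, h2⟩
      rw [hd] at this; exact this
    have hadd := hμ.2.2 _ (alg_inter h𝔄 hB hA) _ (alg_inter h𝔄 hB hA') hdisj
    have hle : μ ((B ∩ A) ∪ (B ∩ A')) ≤ μ B := by
      apply mu_mono h𝔄 hμ (h𝔄.2.2 _ (alg_inter h𝔄 hB hA) _ (alg_inter h𝔄 hB hA')) hB
      intro x hx; rcases hx with h | h <;> exact h.1
    linarith

lemma inner_add {A A' W : Set X} (hA : A ∈ 𝔄) (hA' : A' ∈ 𝔄) (hd : A ∩ A' = ∅) :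
    innerM 𝔄 μ ((A ∩ W) ∪ (A' ∩ W)) = innerM 𝔄 μ (A ∩ W) + innerM 𝔄 μ (A' ∩ W) := by
  apply le_antisymm
  · apply inner_le h𝔄 hμ
    intro B hB hsub
    have h1 : B ∩ A ⊆ A ∩ W := by
      rintro x ⟨hxB, hxA⟩
      rcases hsub hxB with h | h
      · exact h
      · exfalso; have : x ∈ A ∩ A' := ⟨hxA, h.1⟩; rw [hd] at this; exact this
    have h2 : B \ A ⊆ A' ∩ W := by
      rintro x ⟨hxB, hxA⟩
      rcases hsub hxB with h | h
      · exact absurd h.1 hxA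
      · exact h
    have hi1 := le_inner h𝔄 hμ (alg_inter h𝔄 hB hA) h1
    have hi2 := le_inner h𝔄 hμ (alg_diff h𝔄 hB hA) h2
    have := mu_split h𝔄 hμ hA hB
    linarith
  · have key : ∀ B ∈ 𝔄, B ⊆ A ∩ W → ∀ B' ∈ 𝔄, B' ⊆ A' ∩ W →
        μ B + μ B' ≤ innerM 𝔄 μ ((A ∩ W) ∪ (A' ∩ W)) := by
      intro B hB hBE B' hB' hB'F
      have hdisj : Disjoint B B' := by
        rw [Set.disjoint_iff_inter_eq_empty]
        ext x; simp only [mem_inter_iff, mem_empty_iff_false, iff_false]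
        rintro ⟨h1, h2⟩
        have : x ∈ A ∩ A' := ⟨(hBE h1).1, (hB'F h2).1⟩
        rw [hd] at this; exact this
      have hadd := hμ.2.2 B hB B' hB' hdisj
      have := le_inner h𝔄 hμ (h𝔄.2.2 B hB B' hB') (union_subset_union hBE hB'F)
      linarith
    have : innerM 𝔄 μ (A ∩ W) ≤ innerM 𝔄 μ ((A ∩ W) ∪ (A' ∩ W)) - innerM 𝔄 μ (A' ∩ W) := by
      apply inner_le h𝔄 hμ
      intro B hB hBE
      have : innerM 𝔄 μ (A' ∩ W) ≤ innerM 𝔄 μ ((A ∩ W) ∪ (A' ∩ W)) - μ B := by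
        apply inner_le h𝔄 hμ
        intro B' hB' hB'F
        linarith [key B hB hBE B' hB' hB'F]
      linarith
    linarith

/-- the key complementary identity -/
lemma outer_inner_compl {A W : Set X} (hA : A ∈ 𝔄) :
    outerM 𝔄 μ (A ∩ W) + innerM 𝔄 μ (A ∩ Wᶜ) = μ A := by
  apply le_antisymm
  · have : innerM 𝔄 μ (A ∩ Wᶜ) ≤ μ A - outerM 𝔄 μ (A ∩ W) := by
      apply inner_le h𝔄 hμ
      intro B hB hBE
      have hBA : B ⊆ A := fun x hx => (hBE hx).1
      have hsub : A ∩ W ⊆ A \ B := by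
        rintro x ⟨hxA, hxW⟩
        exact ⟨hxA, fun hxB => (hBE hxB).2 hxW⟩
      have h1 := outer_le h𝔄 hμ (alg_diff h𝔄 hA hB) hsub
      have h2 := mu_split h𝔄 hμ hB hA
      rw [inter_eq_self_of_subset_right hBA] at h2
      linarith
    linarith
  · have : μ A - innerM 𝔄 μ (A ∩ Wᶜ) ≤ outerM 𝔄 μ (A ∩ W) := by
      apply le_outer h𝔄 hμ
      intro B hB hEB
      have hsub : A \ B ⊆ A ∩ Wᶜ := by
        rintro x ⟨hxA, hxB⟩
        refine ⟨hxA, fun hxW => hxB (hEB ⟨hxA, hxW⟩)⟩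
      have h1 := le_inner h𝔄 hμ (alg_diff h𝔄 hA hB) hsub
      have h2 := mu_split h𝔄 hμ hB hA
      have h3 := mu_mono h𝔄 hμ (alg_inter h𝔄 hA hB) hB (fun x hx => hx.2)
      linarith
    linarith
end

section
set_option linter.unusedSectionVars false
variable {X : Type*} {𝔄 : Set (Set X)} {μ : Set X → ℝ}
variable (h𝔄 : IsAlg 𝔄) (hμ : IsFAProb 𝔄 μ)
include h𝔄 hμ

lemma trace_reduce {A A' W : Set X} (hd : (A ∩ W) ∩ (A' ∩ W) = ∅) :
    A' ∩ W = (A' \ A) ∩ W := by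
  ext x
  constructor
  · rintro ⟨hxA', hxW⟩
    refine ⟨⟨hxA', fun hxA => ?_⟩, hxW⟩
    have : x ∈ (A ∩ W) ∩ (A' ∩ W) := ⟨⟨hxA, hxW⟩, hxA', hxW⟩
    rw [hd] at this; exact this
  · rintro ⟨⟨hxA', _⟩, hxW⟩; exact ⟨hxA', hxW⟩

lemma outer_add' {A A' W : Set X} (hA : A ∈ 𝔄) (hA' : A' ∈ 𝔄)
    (hd : (A ∩ W) ∩ (A' ∩ W) = ∅) :
    outerM 𝔄 μ ((A ∩ W) ∪ (A' ∩ W)) = outerM 𝔄 μ (A ∩ W) + outerM 𝔄 μ (A' ∩ W) := by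
  rw [trace_reduce h𝔄 hμ hd]
  exact outer_add h𝔄 hμ hA (alg_diff h𝔄 hA' hA)
    (by ext x; simp only [mem_inter_iff, mem_diff, mem_empty_iff_false, iff_false]; tauto)

lemma inner_add' {A A' W : Set X} (hA : A ∈ 𝔄) (hA' : A' ∈ 𝔄)
    (hd : (A ∩ W) ∩ (A' ∩ W) = ∅) :
    innerM 𝔄 μ ((A ∩ W) ∪ (A' ∩ W)) = innerM 𝔄 μ (A ∩ W) + innerM 𝔄 μ (A' ∩ W) := by
  rw [trace_reduce h𝔄 hμ hd]
  exact inner_add h𝔄 hμ hA (alg_diff h𝔄 hA' hA)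
    (by ext x; simp only [mem_inter_iff, mem_diff, mem_empty_iff_false, iff_false]; tauto)
end


/-- The algebra of sets generated by the family `S`. -/
inductive GenAlg {X : Type*} (S : Set (Set X)) : Set X → Prop
  | basic : ∀ A ∈ S, GenAlg S A
  | empty : GenAlg S ∅
  | compl : ∀ A, GenAlg S A → GenAlg S Aᶜ
  | union : ∀ A B, GenAlg S A → GenAlg S B → GenAlg S (A ∪ B)


lemma genAlg_repr {X : Type*} {𝔄 : Set (Set X)} (h𝔄 : IsAlg 𝔄) (Z : Set X)
    {C : Set X} (hC : GenAlg (𝔄 ∪ {Z}) C) :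
    ∃ A ∈ 𝔄, ∃ B ∈ 𝔄, C = (A ∩ Z) ∪ (B ∩ Zᶜ) := by
  induction hC with
  | basic A hA =>
    rcases hA with hA | hA
    · exact ⟨A, hA, A, hA, by ext x; by_cases hx : x ∈ Z <;> simp [hx]⟩
    · rw [mem_singleton_iff] at hA
      subst hA
      refine ⟨univ, by simpa using h𝔄.2.1 ∅ h𝔄.1, ∅, h𝔄.1, by simp⟩
  | empty => exact ⟨∅, h𝔄.1, ∅, h𝔄.1, by simp⟩
  | compl A _ ih =>
    obtain ⟨A₁, hA₁, B₁, hB₁, rfl⟩ := ih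
    refine ⟨A₁ᶜ, h𝔄.2.1 _ hA₁, B₁ᶜ, h𝔄.2.1 _ hB₁, ?_⟩
    ext x; by_cases hx : x ∈ Z <;> simp [hx]
  | union A B _ _ ihA ihB =>
    obtain ⟨A₁, hA₁, B₁, hB₁, rfl⟩ := ihA
    obtain ⟨A₂, hA₂, B₂, hB₂, rfl⟩ := ihB
    refine ⟨A₁ ∪ A₂, h𝔄.2.2 _ hA₁ _ hA₂, B₁ ∪ B₂, h𝔄.2.2 _ hB₁ _ hB₂, ?_⟩
    ext x; by_cases hx : x ∈ Z <;> simp [hx] <;> tauto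


/-- If `μ*(A ∩ Z) > 0` and `μ*(A ∩ Zᶜ) > 0` whenever these intersections are
nonempty (for `A ∈ 𝔄`), then a strictly positive `μ` extends to a strictly positive
finitely additive probability measure on `𝔄(Z)`. -/
theorem stmt_4 {X : Type*} (𝔄 : Set (Set X)) (h𝔄 : IsAlg 𝔄)
    (μ : Set X → ℝ) (hμ : IsFAProb 𝔄 μ) (hsp : StrictlyPos 𝔄 μ) (Z : Set X)
    (h0 : ∀ A ∈ 𝔄, (A ∩ Z).Nonempty → 0 < outerM 𝔄 μ (A ∩ Z))
    (h1 : ∀ A ∈ 𝔄, (A ∩ Zᶜ).Nonempty → 0 < outerM 𝔄 μ (A ∩ Zᶜ)) :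
    ∃ ν : Set X → ℝ, (∀ A ∈ 𝔄, ν A = μ A) ∧
      IsFAProb {C | GenAlg (𝔄 ∪ {Z}) C} ν ∧
      StrictlyPos {C | GenAlg (𝔄 ∪ {Z}) C} ν := by
  classical
  set ν : Set X → ℝ := fun E =>
    (outerM 𝔄 μ (E ∩ Z) + innerM 𝔄 μ (E ∩ Z) +
      outerM 𝔄 μ (E ∩ Zᶜ) + innerM 𝔄 μ (E ∩ Zᶜ)) / 2 with hν
  have hext : ∀ A ∈ 𝔄, ν A = μ A := by
    intro A hA
    have e1 := outer_inner_compl h𝔄 hμ (W := Z) hA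
    have e2 := outer_inner_compl h𝔄 hμ (W := Zᶜ) hA
    rw [compl_compl] at e2
    simp only [hν]
    linarith
  refine ⟨ν, hext, ⟨?_, ?_, ?_⟩, ?_⟩
  · -- ν univ = 1
    rw [hext univ (alg_univ h𝔄), hμ.1]
  · -- nonneg
    intro A _
    have := outer_nonneg h𝔄 hμ (A ∩ Z)
    have := outer_nonneg h𝔄 hμ (A ∩ Zᶜ)
    have := inner_nonneg h𝔄 hμ (A ∩ Z)
    have := inner_nonneg h𝔄 hμ (A ∩ Zᶜ)
    simp only [hν]; positivity
  · -- additivity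
    intro C hC D hD hdisj
    obtain ⟨A₁, hA₁, B₁, hB₁, hCrep⟩ := genAlg_repr h𝔄 Z hC
    obtain ⟨A₂, hA₂, B₂, hB₂, hDrep⟩ := genAlg_repr h𝔄 Z hD
    have hCZ : C ∩ Z = A₁ ∩ Z := by
      rw [hCrep]; ext x; by_cases hx : x ∈ Z <;> simp [hx]
    have hCZc : C ∩ Zᶜ = B₁ ∩ Zᶜ := by
      rw [hCrep]; ext x; by_cases hx : x ∈ Z <;> simp [hx]
    have hDZ : D ∩ Z = A₂ ∩ Z := by
      rw [hDrep]; ext x; by_cases hx : x ∈ Z <;> simp [hx]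
    have hDZc : D ∩ Zᶜ = B₂ ∩ Zᶜ := by
      rw [hDrep]; ext x; by_cases hx : x ∈ Z <;> simp [hx]
    have hCD : C ∩ D = ∅ := Set.disjoint_iff_inter_eq_empty.mp hdisj
    have hdZ : (A₁ ∩ Z) ∩ (A₂ ∩ Z) = ∅ := by
      rw [← hCZ, ← hDZ]
      ext x; simp only [mem_inter_iff, mem_empty_iff_false, iff_false]
      rintro ⟨⟨h1, -⟩, h2, h3⟩
      have : x ∈ C ∩ D := ⟨h1, h2⟩; rw [hCD] at this; exact this
    have hdZc : (B₁ ∩ Zᶜ) ∩ (B₂ ∩ Zᶜ) = ∅ := by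
      rw [← hCZc, ← hDZc]
      ext x; simp only [mem_inter_iff, mem_empty_iff_false, iff_false]
      rintro ⟨⟨h1, -⟩, h2, h3⟩
      have : x ∈ C ∩ D := ⟨h1, h2⟩; rw [hCD] at this; exact this
    have hUZ : (C ∪ D) ∩ Z = (A₁ ∩ Z) ∪ (A₂ ∩ Z) := by
      rw [union_inter_distrib_right, hCZ, hDZ]
    have hUZc : (C ∪ D) ∩ Zᶜ = (B₁ ∩ Zᶜ) ∪ (B₂ ∩ Zᶜ) := by
      rw [union_inter_distrib_right, hCZc, hDZc]
    have o1 := outer_add' h𝔄 hμ hA₁ hA₂ hdZ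
    have i1 := inner_add' h𝔄 hμ hA₁ hA₂ hdZ
    have o2 := outer_add' h𝔄 hμ hB₁ hB₂ hdZc
    have i2 := inner_add' h𝔄 hμ hB₁ hB₂ hdZc
    simp only [hν, hUZ, hUZc, hCZ, hCZc, hDZ, hDZc, o1, i1, o2, i2]
    ring
  · -- strict positivity
    intro C hC hCne
    obtain ⟨A₁, hA₁, B₁, hB₁, hCrep⟩ := genAlg_repr h𝔄 Z hC
    have hCZ : C ∩ Z = A₁ ∩ Z := by
      rw [hCrep]; ext x; by_cases hx : x ∈ Z <;> simp [hx]
    have hCZc : C ∩ Zᶜ = B₁ ∩ Zᶜ := by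
      rw [hCrep]; ext x; by_cases hx : x ∈ Z <;> simp [hx]
    have hnn1 := outer_nonneg h𝔄 hμ (C ∩ Z)
    have hnn2 := outer_nonneg h𝔄 hμ (C ∩ Zᶜ)
    have hnn3 := inner_nonneg h𝔄 hμ (C ∩ Z)
    have hnn4 := inner_nonneg h𝔄 hμ (C ∩ Zᶜ)
    have : (C ∩ Z).Nonempty ∨ (C ∩ Zᶜ).Nonempty := by
      obtain ⟨x, hx⟩ := hCne
      by_cases hxZ : x ∈ Z
      · exact Or.inl ⟨x, hx, hxZ⟩
      · exact Or.inr ⟨x, hx, hxZ⟩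
    rcases this with h | h
    · have hpos : 0 < outerM 𝔄 μ (C ∩ Z) := by
        rw [hCZ]; exact h0 A₁ hA₁ (hCZ ▸ h)
      simp only [hν]; linarith
    · have hpos : 0 < outerM 𝔄 μ (C ∩ Zᶜ) := by
        rw [hCZc]; exact h1 B₁ hB₁ (hCZc ▸ h)
      simp only [hν]; linarith
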